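/- Let A be a finite set with |A| = n ≥ 1, let U be the uniform distribution on A, and let δ ≥ 0 with δ ≤ 1 - 1/n. For any integer s with 1 ≤ s ≤ n(1-δ), the maximum over all probability distributions P on A with statistical distance Δ(P,U) = δ of the sum of the s largest probabilities P(a) equals δ + s/n. -/

import Mathlib

lemma max_zero_eq {x : ℝ} : max x 0 = (|x| + x) / 2 := by
  rcases le_total 0 x with h | h
  · rw [max_eq_left h, abs_of_nonneg h]; ring
  · rw [max_eq_right h, abs_of_nonpos h]; ring

theorem stmt_0 {A : Type*} [Fintype A] [DecidableEq A] (n : ℕ)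
    (hn : Fintype.card A = n) (hn1 : 1 ≤ n)
    (δ : ℝ) (hδ0 : 0 ≤ δ) (hδ1 : δ ≤ 1 - 1 / n)
    (s : ℕ) (hs1 : 1 ≤ s) (hs2 : (s : ℝ) ≤ n * (1 - δ)) :
    IsGreatest
      {v : ℝ | ∃ (P : A → ℝ) (S : Finset A),
        (∀ a, 0 ≤ P a) ∧ (∑ a, P a) = 1 ∧
        (1 / 2) * ∑ a, |P a - 1 / n| = δ ∧
        S.card = s ∧ v = ∑ a ∈ S, P a}
      (δ + s / n) := by
  have hnR : (0:ℝ) < n := by positivity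
  have hsn : s ≤ n := by
    have : (s:ℝ) ≤ n := le_trans hs2 (by nlinarith)
    exact_mod_cast this
  constructor
  · -- membership
    rcases eq_or_lt_of_le hsn with heq | hlt
    · -- s = n, then δ = 0
      have hδ : δ = 0 := by
        have : (n:ℝ) ≤ n * (1 - δ) := by rw [← heq] at hs2 ⊢; exact_mod_cast hs2
        nlinarith
      refine ⟨fun _ => 1 / n, Finset.univ, fun a => by positivity, ?_, ?_, by simp [hn, heq], ?_⟩
      · simp [Finset.sum_const, hn]; field_simp
      · simp [hδ]
      · simp [hδ, Finset.sum_const, hn, ← heq]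
        field_simp
    · -- s < n
      obtain ⟨S, -, hScard⟩ := Finset.exists_subset_card_eq (s := (Finset.univ : Finset A)) (n := s) (by rw [Finset.card_univ, hn]; exact hsn)
      set m : ℕ := n - s with hm
      have hm0 : 0 < m := Nat.sub_pos_of_lt hlt
      have hmR : ((m : ℝ)) = n - s := by
        rw [hm]; push_cast [Nat.sub_le _ _]; rw [Nat.cast_sub hsn]
      have hsR : (0:ℝ) < s := by exact_mod_cast hs1
      have hmR0 : (0:ℝ) < m := by exact_mod_cast hm0
      have hδm : δ / m ≤ 1 / n := by
        rw [div_le_div_iff₀ hmR0 hnR, hmR]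
        nlinarith
      have hns : (n:ℝ) - s ≠ 0 := by rw [← hmR]; exact ne_of_gt hmR0
      refine ⟨fun a => if a ∈ S then 1 / n + δ / s else 1 / n - δ / m, S, ?_, ?_, ?_, hScard, ?_⟩
      · intro a
        by_cases h : a ∈ S
        · dsimp only; rw [if_pos h]; positivity
        · dsimp only; rw [if_neg h]; linarith
      · rw [← Finset.sum_add_sum_compl S]
        have e1 : ∑ a ∈ S, (if a ∈ S then 1 / (n:ℝ) + δ / s else 1 / n - δ / m)
            = s * (1 / n + δ / s) := by
          rw [Finset.sum_congr rfl (fun a ha => if_pos ha), Finset.sum_const, hScard,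
            nsmul_eq_mul]
        have e2 : ∑ a ∈ Sᶜ, (if a ∈ S then 1 / (n:ℝ) + δ / s else 1 / n - δ / m)
            = m * (1 / n - δ / m) := by
          rw [Finset.sum_congr rfl (fun a ha => if_neg (Finset.mem_compl.mp ha)),
            Finset.sum_const, Finset.card_compl, hScard, hn, nsmul_eq_mul]
        rw [e1, e2, hmR]
        field_simp
        ring
      · have e0 : ∀ a, |(if a ∈ S then 1 / (n:ℝ) + δ / s else 1 / n - δ / m) - 1 / n|
            = if a ∈ S then δ / s else δ / m := by
          intro a
          by_cases h : a ∈ S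
          · rw [if_pos h, if_pos h]
            have e : 1/(n:ℝ) + δ/s - 1/n = δ/s := by ring
            rw [e, abs_of_nonneg (by positivity)]
          · rw [if_neg h, if_neg h]
            have e : 1/(n:ℝ) - δ/m - 1/n = -(δ/m) := by ring
            rw [e, abs_neg, abs_of_nonneg (by positivity)]
        simp_rw [e0]
        rw [← Finset.sum_add_sum_compl S,
          Finset.sum_congr rfl (fun a ha => if_pos ha),
          Finset.sum_congr rfl (fun a (ha : a ∈ Sᶜ) => if_neg (Finset.mem_compl.mp ha)),
          Finset.sum_const, Finset.sum_const, Finset.card_compl, hScard, hn,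
          nsmul_eq_mul, nsmul_eq_mul, hmR]
        field_simp
        ring
      · rw [Finset.sum_congr rfl (fun a ha => if_pos ha), Finset.sum_const, hScard,
          nsmul_eq_mul]
        field_simp
        ring
  · -- upper bound
    rintro v ⟨P, S, hP0, hP1, hPd, hScard, rfl⟩
    have hSsub : S ⊆ Finset.univ := Finset.subset_univ S
    have key : ∑ a ∈ S, (P a - 1 / n) ≤ δ := by
      have h1 : ∑ a ∈ S, (P a - 1 / n) ≤ ∑ a ∈ S, max (P a - 1 / n) 0 :=
        Finset.sum_le_sum fun a _ => le_max_left _ _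
      have h2 : ∑ a ∈ S, max (P a - 1 / n) 0 ≤ ∑ a, max (P a - 1 / n) 0 :=
        Finset.sum_le_sum_of_subset_of_nonneg hSsub fun a _ _ => le_max_right _ _
      have h0 : ∑ a, (P a - 1 / n) = 0 := by
        rw [Finset.sum_sub_distrib, hP1, Finset.sum_const, Finset.card_univ, hn,
          nsmul_eq_mul]
        field_simp
        ring
      have h3 : ∑ a, max (P a - 1 / n) 0 = δ := by
        simp_rw [max_zero_eq]
        rw [← Finset.sum_div, Finset.sum_add_distrib, h0, add_zero]
        rw [← hPd]; ring
      linarith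
    have : ∑ a ∈ S, P a = ∑ a ∈ S, (P a - 1 / n) + s / n := by
      rw [Finset.sum_sub_distrib, Finset.sum_const, hScard, nsmul_eq_mul]
      ring
    linarith
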